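/- Let E be a real inner product space, let f : E → ℝ be 1-Lipschitz, and let a, b ∈ E with a ≠ b satisfy f(a) − f(b) = ‖a − b‖. Let τ ∈ (0,1) and x_τ = τ·a + (1−τ)·b, and suppose f is (Fréchet) differentiable at x_τ. Then the gradient of f at x_τ equals the unit vector (a − b)/‖a − b‖, which also equals (a − x_τ)/‖a − x_τ‖. -/

import Mathlib

open InnerProductSpace

/-- On the segment, f is affine with slope ‖a-b‖. -/
lemma seg_val {E : Type*} [NormedAddCommGroup E] [InnerProductSpace ℝ E]
    (f : E → ℝ) (hf : LipschitzWith 1 f)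
    (a b : E) (hab : f a - f b = ‖a - b‖) {t : ℝ} (ht : t ∈ Set.Icc (0:ℝ) 1) :
    f (b + t • (a - b)) = f b + t * ‖a - b‖ := by
  obtain ⟨ht0, ht1⟩ := ht
  have h1 : f (b + t • (a - b)) - f b ≤ t * ‖a - b‖ := by
    have := hf.dist_le_mul (b + t • (a - b)) b
    simp only [NNReal.coe_one, one_mul, dist_eq_norm] at this
    calc f (b + t • (a - b)) - f b ≤ |f (b + t • (a - b)) - f b| := le_abs_self _
      _ ≤ ‖b + t • (a - b) - b‖ := this
      _ = t * ‖a - b‖ := by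
          rw [add_sub_cancel_left, norm_smul, Real.norm_eq_abs, abs_of_nonneg ht0]
  have h2 : f a - f (b + t • (a - b)) ≤ (1 - t) * ‖a - b‖ := by
    have := hf.dist_le_mul a (b + t • (a - b))
    simp only [NNReal.coe_one, one_mul, dist_eq_norm] at this
    calc f a - f (b + t • (a - b)) ≤ |f a - f (b + t • (a - b))| := le_abs_self _
      _ ≤ ‖a - (b + t • (a - b))‖ := this
      _ = (1 - t) * ‖a - b‖ := by
          have : a - (b + t • (a - b)) = (1 - t) • (a - b) := by
            rw [sub_smul, one_smul]; abel
          rw [this, norm_smul, Real.norm_eq_abs, abs_of_nonneg (by linarith)]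
  have : f (b + t • (a - b)) - f b ≥ t * ‖a - b‖ := by nlinarith [hab]
  linarith

theorem gradient_eq_unit_direction
    {E : Type*} [NormedAddCommGroup E] [InnerProductSpace ℝ E] [CompleteSpace E]
    (f : E → ℝ) (hf : LipschitzWith 1 f)
    (a b : E) (hne : a ≠ b) (hab : f a - f b = ‖a - b‖)
    (τ : ℝ) (hτ : τ ∈ Set.Ioo (0 : ℝ) 1)
    (hdiff : DifferentiableAt ℝ f (τ • a + (1 - τ) • b)) :
    gradient f (τ • a + (1 - τ) • b) = ‖a - b‖⁻¹ • (a - b) ∧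
    ‖a - b‖⁻¹ • (a - b) =
      ‖a - (τ • a + (1 - τ) • b)‖⁻¹ • (a - (τ • a + (1 - τ) • b)) := by
  obtain ⟨hτ0, hτ1⟩ := hτ
  set x := τ • a + (1 - τ) • b with hx
  have hd0 : a - b ≠ 0 := sub_ne_zero.mpr hne
  have hnd : (0:ℝ) < ‖a - b‖ := norm_pos_iff.mpr hd0
  have hxeq : b + τ • (a - b) = x := by
    rw [hx]; module
  -- second part
  have hsec : a - x = (1 - τ) • (a - b) := by
    rw [hx]; module
  have part2 : ‖a - b‖⁻¹ • (a - b) = ‖a - x‖⁻¹ • (a - x) := by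
    rw [hsec, norm_smul, Real.norm_eq_abs, abs_of_pos (by linarith : (0:ℝ) < 1 - τ), smul_smul]
    congr 1
    rw [mul_inv, mul_right_comm, inv_mul_cancel₀ (by linarith : (1:ℝ) - τ ≠ 0), one_mul]
  refine ⟨?_, part2⟩
  -- derivative of f along the line
  set g := gradient f x with hg
  have hgrad : HasFDerivAt f (toDual ℝ E g) x := by
    rw [hg, gradient, LinearIsometryEquiv.apply_symm_apply]
    exact hdiff.hasFDerivAt
  have hline : HasDerivAt (fun t : ℝ => b + t • (a - b)) (a - b) τ := by
    simpa using ((hasDerivAt_id τ).smul_const (a - b)).const_add b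
  have hgrad' : HasFDerivAt f (toDual ℝ E g) (b + τ • (a - b)) := by
    rw [hxeq]; exact hgrad
  have hcomp : HasDerivAt (fun t : ℝ => f (b + t • (a - b)))
      (toDual ℝ E g (a - b)) τ := by
    exact hgrad'.comp_hasDerivAt τ hline
  -- compare with the affine function
  have heq : (fun t : ℝ => f (b + t • (a - b))) =ᶠ[nhds τ]
      (fun t : ℝ => f b + t * ‖a - b‖) := by
    filter_upwards [Ioo_mem_nhds hτ0 hτ1] with t ht
    exact seg_val f hf a b hab ⟨le_of_lt ht.1, le_of_lt ht.2⟩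
  have haff : HasDerivAt (fun t : ℝ => f b + t * ‖a - b‖) ‖a - b‖ τ := by
    simpa using ((hasDerivAt_id τ).mul_const ‖a - b‖).const_add (f b)
  have hder : toDual ℝ E g (a - b) = ‖a - b‖ := by
    have := (haff.congr_of_eventuallyEq heq).unique hcomp
    linarith [this]
  have hinner : ⟪g, a - b⟫_ℝ = ‖a - b‖ := by
    rw [← toDual_apply_apply]; exact hder
  -- norm bound
  have hnormle : ‖g‖ ≤ 1 := by
    have h1 := hgrad.le_of_lipschitz hf
    rw [LinearIsometryEquiv.norm_map] at h1
    simpa using h1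
  have hcs : ‖a - b‖ ≤ ‖g‖ * ‖a - b‖ := by
    calc ‖a - b‖ = ⟪g, a - b⟫_ℝ := hinner.symm
      _ ≤ ‖g‖ * ‖a - b‖ := real_inner_le_norm g (a - b)
  have hng : ‖g‖ = 1 := by
    nlinarith
  have : ⟪g, a - b⟫_ℝ = ‖g‖ * ‖a - b‖ := by rw [hng, one_mul]; exact hinner
  have hkey : ‖a - b‖ • g = ‖g‖ • (a - b) := inner_eq_norm_mul_iff_real.mp this
  rw [hng, one_smul] at hkey
  have hgid : g = ‖a - b‖⁻¹ • (‖a - b‖ • g) := by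
    rw [smul_smul, inv_mul_cancel₀ (ne_of_gt hnd), one_smul]
  rw [hgid, hkey]
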